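/- Let E_1 be the two-dimensional complex evolution algebra with structural matrix ((1,0),(0,0)) (i.e. e₁e₁ = e₁, e₂e₂ = 0). A linear map P : ℂ² → ℂ² is a Rota–Baxter operator of weight 0 on E_1 if and only if there exist b, d ∈ ℂ with P(e₁) = b e₂ and P(e₂) = d e₂ (i.e. P has matrix ((0,b),(0,d))). -/
import Mathlib


/-- The evolution-algebra product on `ℂ²` determined by a structural matrix `A`:
`e_i · e_i = a_{i1} e₁ + a_{i2} e₂` and `e₁ · e₂ = e₂ · e₁ = 0`. -/
noncomputable def evMulC (A : Matrix (Fin 2) (Fin 2) ℂ) (x y : Fin 2 → ℂ) : Fin 2 → ℂ :=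
  fun k => x 0 * y 0 * A 0 k + x 1 * y 1 * A 1 k

/-- `P` is a Rota–Baxter operator of weight `lam` on the evolution algebra with structural
matrix `A`: `P(x)·P(y) = P(x·P(y) + P(x)·y + lam x·y)` for all `x, y`. -/
def IsRotaBaxter (A : Matrix (Fin 2) (Fin 2) ℂ) (lam : ℂ)
    (P : (Fin 2 → ℂ) →ₗ[ℂ] (Fin 2 → ℂ)) : Prop :=
  ∀ x y : Fin 2 → ℂ,
    evMulC A (P x) (P y) = P (evMulC A x (P y) + evMulC A (P x) y + lam • evMulC A x y)

lemma Papp (P : (Fin 2 → ℂ) →ₗ[ℂ] (Fin 2 → ℂ)) (x : Fin 2 → ℂ) (k : Fin 2) :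
    P x k = x 0 * P ![1, 0] k + x 1 * P ![0, 1] k := by
  have hx : x = x 0 • ![(1:ℂ), 0] + x 1 • ![0, 1] := by
    funext j; fin_cases j <;> simp
  calc P x k = P (x 0 • ![(1:ℂ), 0] + x 1 • ![0, 1]) k := by rw [← hx]
    _ = x 0 * P ![1, 0] k + x 1 * P ![0, 1] k := by
        rw [map_add, map_smul, map_smul]; simp

/-- Rota–Baxter operators of weight 0 on `E₁` (`e₁e₁ = e₁`) are exactly those
with matrix `((0,b),(0,d))`. -/
theorem rb_weight0_E1 (P : (Fin 2 → ℂ) →ₗ[ℂ] (Fin 2 → ℂ)) :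
    IsRotaBaxter !![1, 0; 0, 0] 0 P ↔
      ∃ b d : ℂ, P ![1, 0] = ![0, b] ∧ P ![0, 1] = ![0, d] := by
  constructor
  · intro h
    have harg1 : evMulC !![1, 0; 0, 0] ![1, 0] (P ![1, 0]) +
        evMulC !![1, 0; 0, 0] (P ![1, 0]) ![1, 0] +
        (0:ℂ) • evMulC !![1, 0; 0, 0] ![1, 0] ![1, 0]
        = (P ![1, 0] 0 + P ![1, 0] 0) • ![(1:ℂ), 0] := by
      funext k; fin_cases k <;> simp [evMulC]
    have harg2 : evMulC !![1, 0; 0, 0] ![0, 1] (P ![0, 1]) +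
        evMulC !![1, 0; 0, 0] (P ![0, 1]) ![0, 1] +
        (0:ℂ) • evMulC !![1, 0; 0, 0] ![0, 1] ![0, 1] = 0 := by
      funext k; fin_cases k <;> simp [evMulC]
    have h1 := congrFun (h ![1, 0] ![1, 0]) 0
    have h2 := congrFun (h ![0, 1] ![0, 1]) 0
    rw [harg1, map_smul] at h1
    rw [harg2, map_zero] at h2
    simp only [evMulC, Pi.smul_apply, Pi.zero_apply, smul_eq_mul,
      Matrix.cons_val_zero, Matrix.cons_val_one, Matrix.head_cons,
      Matrix.cons_val', Matrix.empty_val', Matrix.cons_val_fin_one,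
      Matrix.of_apply, Matrix.vecHead, Matrix.vecTail] at h1 h2
    have ha0 : P ![(1:ℂ), 0] 0 = 0 := by
      have : P ![(1:ℂ), 0] 0 * P ![(1:ℂ), 0] 0 = 0 := by linear_combination -h1
      exact mul_self_eq_zero.mp this
    have hc0 : P ![(0:ℂ), 1] 0 = 0 := by
      have : P ![(0:ℂ), 1] 0 * P ![(0:ℂ), 1] 0 = 0 := by linear_combination h2
      exact mul_self_eq_zero.mp this
    refine ⟨P ![1, 0] 1, P ![0, 1] 1, ?_, ?_⟩ <;>
      (funext j; fin_cases j) <;> simp [ha0, hc0]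
  · rintro ⟨b, d, h1, h2⟩ x y
    have px : P x 0 = 0 := by rw [Papp, h1, h2]; simp
    have py : P y 0 = 0 := by rw [Papp, h1, h2]; simp
    have e1 : evMulC !![1, 0; 0, 0] x (P y) = 0 := by
      funext k; fin_cases k <;> simp [evMulC, py]
    have e2 : evMulC !![1, 0; 0, 0] (P x) y = 0 := by
      funext k; fin_cases k <;> simp [evMulC, px]
    have e3 : evMulC !![1, 0; 0, 0] (P x) (P y) = 0 := by
      funext k; fin_cases k <;> simp [evMulC, px]
    rw [e1, e2, e3]
    simp
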